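/- Dynamic fit of BanSaP with two-point feedback (Theorem 2, fit bound): Under the two-point BanSaP setting, for every constant β > 0 and every realization of the random sequence u_1, …, u_T, setting ‖λ̄‖ := max_{1 ≤ t ≤ T+1} ‖λ_t‖, the dynamic fit satisfies ‖[ (1/2)·Σ_{t=1}^T ( g_t(x_{1,t}) + g_t(x_{2,t}) ) ]⁺‖ ≤ ‖λ̄‖/μ + G²√N·T/(2β) + δG√N·T + β√N·T·( α²d²G² + α²G²‖λ̄‖² ), where [·]⁺ denotes the entrywise positive part. -/

import Mathlib

open Metric Finset
open scoped Pointwise RealInnerProductSpace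

/-- Entrywise positive part of a vector in `ℝ^N`. -/
def posPart' {N : ℕ} (v : EuclideanSpace ℝ (Fin N)) : EuclideanSpace ℝ (Fin N) :=
  WithLp.toLp 2 (fun n => max (v n) 0)

lemma proj_contract {E : Type*} [NormedAddCommGroup E] [InnerProductSpace ℝ E]
    {K : Set E} (hK : Convex ℝ K) {y p v : E} (hp : p ∈ K) (hv : v ∈ K)
    (hmin : ∀ z ∈ K, ‖p - y‖ ≤ ‖z - y‖) : ‖p - v‖ ≤ ‖y - v‖ := by
  haveI : Nonempty K := ⟨⟨p, hp⟩⟩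
  have hinf : ‖y - p‖ = ⨅ w : K, ‖y - w‖ := by
    apply le_antisymm
    · exact le_ciInf fun w => by
        rw [norm_sub_rev y p, norm_sub_rev y w]; exact hmin w w.2
    · have hbdd : BddBelow (Set.range fun w : K => ‖y - (w : E)‖) := by
        refine ⟨0, ?_⟩; rintro x ⟨w, rfl⟩; exact norm_nonneg _
      exact ciInf_le hbdd ⟨p, hp⟩
  have h0 := (norm_eq_iInf_iff_real_inner_le_zero hK hp).mp hinf v hv
  have hexp : ‖y - v‖ ^ 2 = ‖y - p‖ ^ 2 + 2 * ⟪y - p, p - v⟫ + ‖p - v‖ ^ 2 := by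
    have : y - v = (y - p) + (p - v) := by abel
    rw [this, norm_add_sq_real]
  have h1 : ⟪y - p, p - v⟫ = -⟪y - p, v - p⟫ := by
    rw [← inner_neg_right]; congr 1; abel
  nlinarith [norm_nonneg (p - v), norm_nonneg (y - v), norm_nonneg (y - p)]

lemma inner_gradient_eq {E : Type*} [NormedAddCommGroup E] [InnerProductSpace ℝ E]
    [CompleteSpace E] (h : E → ℝ) (x w : E) : ⟪gradient h x, w⟫ = fderiv ℝ h x w :=
  InnerProductSpace.toDual_symm_apply

lemma g_diff_and_comp {d N : ℕ} (g : EuclideanSpace ℝ (Fin d) → EuclideanSpace ℝ (Fin N))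
    (hg : ∀ n, Differentiable ℝ (fun x => g x n)) :
    Differentiable ℝ g ∧
      ∀ (x w : EuclideanSpace ℝ (Fin d)) (n : Fin N),
        fderiv ℝ (fun y => g y n) x w = fderiv ℝ g x w n := by
  have hgeq : g = fun x => (PiLp.continuousLinearEquiv 2 ℝ fun _ : Fin N => ℝ).symm
      (fun n => g x n) := rfl
  have hdiff : Differentiable ℝ g := by
    rw [hgeq]
    exact (PiLp.continuousLinearEquiv 2 ℝ fun _ : Fin N => ℝ).symm.differentiable.comp
      (differentiable_pi.mpr hg)
  refine ⟨hdiff, fun x w n => ?_⟩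
  have hcomp : (fun y => g y n) = fun y => (EuclideanSpace.proj n) (g y) := rfl
  rw [hcomp, show (fun y => (EuclideanSpace.proj n) (g y)) = (EuclideanSpace.proj n) ∘ g from rfl,
    fderiv_comp x (EuclideanSpace.proj n).differentiableAt (hdiff x)]
  rw [ContinuousLinearMap.fderiv]; rfl

lemma sum_smul_grad_norm_le {d N : ℕ} (g : EuclideanSpace ℝ (Fin d) → EuclideanSpace ℝ (Fin N))
    (hg : ∀ n, Differentiable ℝ (fun x => g x n)) (x : EuclideanSpace ℝ (Fin d))
    (lam : EuclideanSpace ℝ (Fin N)) (G : ℝ) (hG : ‖fderiv ℝ g x‖ ≤ G) :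
    ‖∑ n, lam n • gradient (fun y => g y n) x‖ ≤ G * ‖lam‖ := by
  obtain ⟨hdiff, hcomp⟩ := g_diff_and_comp g hg
  set s := ∑ n, lam n • gradient (fun y => g y n) x with hs
  have hG0 : 0 ≤ G := le_trans (norm_nonneg _) hG
  have key : ∀ w, ⟪s, w⟫ ≤ G * ‖lam‖ * ‖w‖ := by
    intro w
    have h1 : ⟪s, w⟫ = ∑ n, lam n * (fderiv ℝ g x w n) := by
      rw [hs, sum_inner]
      refine Finset.sum_congr rfl fun n _ => ?_
      rw [real_inner_smul_left, inner_gradient_eq, hcomp x w n]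
    have h2 : ⟪lam, (fderiv ℝ g x w : EuclideanSpace ℝ (Fin N))⟫
        = ∑ n, lam n * fderiv ℝ g x w n := by
      simp [PiLp.inner_apply, RCLike.inner_apply, conj_trivial]
      exact Finset.sum_congr rfl fun _ _ => mul_comm _ _
    calc ⟪s, w⟫ = ⟪lam, (fderiv ℝ g x w : EuclideanSpace ℝ (Fin N))⟫ := by rw [h1, h2]
      _ ≤ ‖lam‖ * ‖fderiv ℝ g x w‖ := real_inner_le_norm _ _
      _ ≤ ‖lam‖ * (G * ‖w‖) := by
          refine mul_le_mul_of_nonneg_left ?_ (norm_nonneg _)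
          exact le_trans ((fderiv ℝ g x).le_opNorm w)
            (mul_le_mul_of_nonneg_right hG (norm_nonneg _))
      _ = G * ‖lam‖ * ‖w‖ := by ring
  rcases eq_or_lt_of_le (norm_nonneg s) with hz | hz
  · rw [← hz]; positivity
  · have := key s
    rw [real_inner_self_eq_norm_sq] at this
    nlinarith

lemma amgm2_aux (β α a b : ℝ) (hβ : 0 ≤ β) :
    β / 2 * (α * (a + b)) ^ 2 ≤ β * (α ^ 2 * a ^ 2 + α ^ 2 * b ^ 2) := by
  nlinarith [mul_nonneg hβ (sq_nonneg (α * (a - b)))]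

lemma half_sum_apply {N : ℕ} (s : Finset ℕ) (F : ℕ → EuclideanSpace ℝ (Fin N)) (n : Fin N) :
    ((1 / 2 : ℝ) • ∑ t ∈ s, F t) n = (1 / 2 : ℝ) * ∑ t ∈ s, F t n := by
  have h : (∑ t ∈ s, F t) n = ∑ t ∈ s, F t n := by rw [WithLp.ofLp_sum]; exact Finset.sum_apply n s (fun t => (F t).ofLp)
  simp [h]

lemma enorm_mono {N : ℕ} (a b : EuclideanSpace ℝ (Fin N)) (h : ∀ n, 0 ≤ a n)
    (h2 : ∀ n, a n ≤ b n) : ‖a‖ ≤ ‖b‖ := by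
  rw [EuclideanSpace.norm_eq, EuclideanSpace.norm_eq]
  apply Real.sqrt_le_sqrt
  apply Finset.sum_le_sum
  intro n _
  have ha := h n; have hab := h2 n
  rw [Real.norm_eq_abs, Real.norm_eq_abs]
  rw [abs_of_nonneg ha, abs_of_nonneg (le_trans ha hab)]
  nlinarith

set_option maxHeartbeats 1000000 in
/-- Dynamic fit of BanSaP with two-point feedback (Theorem 2, fit bound):
for any realization of the perturbations `u_1,…,u_T` and any `β > 0`, with
`λ̄ = max_{1 ≤ t ≤ T+1} ‖λ_t‖`, the dynamic fit satisfies
`‖[(1/2)Σ_t (g_t(x_{1,t}) + g_t(x_{2,t}))]⁺‖ ≤ λ̄/μ + G²√N T/(2β) + δG√N T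
  + β√N T(α²d²G² + α²G²λ̄²)`. -/
theorem bansap_two_point_dynamic_fit
    (d N T : ℕ)
    (X : Set (EuclideanSpace ℝ (Fin d)))
    (hXconv : Convex ℝ X) (hXcomp : IsCompact X)
    (r R F G : ℝ) (hr : 0 < r) (hrR : r ≤ R)
    (hXball : closedBall (0 : EuclideanSpace ℝ (Fin d)) r ⊆ X)
    (hXR : X ⊆ closedBall (0 : EuclideanSpace ℝ (Fin d)) R)
    (f : ℕ → EuclideanSpace ℝ (Fin d) → ℝ)
    (g : ℕ → EuclideanSpace ℝ (Fin d) → EuclideanSpace ℝ (Fin N))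
    (hf_conv : ∀ t ∈ Icc 1 T, ConvexOn ℝ Set.univ (f t))
    (hf_diff : ∀ t ∈ Icc 1 T, Differentiable ℝ (f t))
    (hf_bdd : ∀ t ∈ Icc 1 T, ∀ x ∈ X, |f t x| ≤ F)
    (hf_grad : ∀ t ∈ Icc 1 T, ∀ x ∈ X, ‖gradient (f t) x‖ ≤ G)
    (hf_lip : ∀ t ∈ Icc 1 T, ∀ x y, |f t x - f t y| ≤ G * ‖x - y‖)
    (hg_conv : ∀ t ∈ Icc 1 T, ∀ n, ConvexOn ℝ Set.univ (fun x => g t x n))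
    (hg_diff : ∀ t ∈ Icc 1 T, ∀ n, Differentiable ℝ (fun x => g t x n))
    (hg_grad : ∀ t ∈ Icc 1 T, ∀ n, ∀ x ∈ X, ‖gradient (fun y => g t y n) x‖ ≤ G)
    (hg_lip : ∀ t ∈ Icc 1 T, ∀ n, ∀ x y, |g t x n - g t y n| ≤ G * ‖x - y‖)
    (hg_jac : ∀ t ∈ Icc 1 T, ∀ x ∈ X, ‖fderiv ℝ (g t) x‖ ≤ G)
    (hg_bdd : ∀ t ∈ Icc 1 T, ∀ x ∈ X, ‖g t x‖ ≤ G * R)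
    (α μ δ γ : ℝ) (hα : 0 < α) (hμ : 0 < μ) (hδ : 0 < δ)
    (hγ : γ = δ / r) (hγ1 : γ < 1)
    (u : ℕ → EuclideanSpace ℝ (Fin d))
    (hu : ∀ t ∈ Icc 1 T, ‖u t‖ = 1)
    (xhat : ℕ → EuclideanSpace ℝ (Fin d))
    (lam : ℕ → EuclideanSpace ℝ (Fin N))
    (hx1 : xhat 1 ∈ (1 - γ) • X)
    (hlam1 : lam 1 = 0)
    (hxrec : ∀ t ∈ Icc 1 T,
      xhat (t + 1) ∈ (1 - γ) • X ∧
      ∀ z ∈ (1 - γ) • X,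
        ‖xhat (t + 1) - (xhat t - α •
            (((d : ℝ) / (2 * δ) * (f t (xhat t + δ • u t) - f t (xhat t - δ • u t))) • u t
              + ∑ n, lam t n • gradient (fun y => g t y n) (xhat t)))‖ ≤
        ‖z - (xhat t - α •
            (((d : ℝ) / (2 * δ) * (f t (xhat t + δ • u t) - f t (xhat t - δ • u t))) • u t
              + ∑ n, lam t n • gradient (fun y => g t y n) (xhat t)))‖)
    (hlamrec : ∀ t ∈ Icc 1 T, ∀ n,
      lam (t + 1) n = max (lam t n + μ * (g t (xhat t) n
        + ⟪gradient (fun y => g t y n) (xhat t), xhat (t + 1) - xhat t⟫)) 0)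
    (β : ℝ) (hβ : 0 < β)
    (lambar : ℝ)
    (hlambar : lambar =
      (Icc 1 (T + 1)).sup' (Finset.nonempty_Icc.mpr (by omega)) (fun t => ‖lam t‖)) :
    ‖posPart' ((1 / 2 : ℝ) •
        ∑ t ∈ Icc 1 T, (g t (xhat t + δ • u t) + g t (xhat t - δ • u t)))‖ ≤
      lambar / μ + G ^ 2 * Real.sqrt N * T / (2 * β) + δ * G * Real.sqrt N * T
        + β * Real.sqrt N * T *
            (α ^ 2 * (d : ℝ) ^ 2 * G ^ 2 + α ^ 2 * G ^ 2 * lambar ^ 2) := by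
  have hγ0 : 0 < γ := by rw [hγ]; positivity
  have hlambar0 : 0 ≤ lambar := by
    rw [hlambar]
    exact le_trans (norm_nonneg (lam 1))
      (Finset.le_sup' (fun t => ‖lam t‖)
        (mem_Icc.mpr ⟨le_refl 1, Nat.succ_le_succ (Nat.zero_le T)⟩))
  -- trivial case T = 0
  rcases Nat.eq_zero_or_pos T with rfl | hT
  · have hzero : posPart' ((1 / 2 : ℝ) •
        ∑ t ∈ Icc 1 0, (g t (xhat t + δ • u t) + g t (xhat t - δ • u t)))
        = (0 : EuclideanSpace ℝ (Fin N)) := by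
      ext n
      simp [posPart']
    rw [hzero, norm_zero]
    have h0 : 0 ≤ lambar / μ := by positivity
    push_cast
    simp only [mul_zero, zero_mul, zero_div, add_zero, zero_add]
    exact h0
  -- main case
  have h0X : (0 : EuclideanSpace ℝ (Fin d)) ∈ X := hXball (mem_closedBall_self hr.le)
  have hKconv : Convex ℝ ((1 - γ) • X) := hXconv.smul _
  have hKX : (1 - γ) • X ⊆ X := by
    rintro z ⟨x, hx, rfl⟩
    have := hXconv hx h0X (by linarith : (0:ℝ) ≤ 1 - γ) hγ0.le (by ring)
    simpa using this
  have hxK : ∀ t ∈ Icc 1 (T + 1), xhat t ∈ (1 - γ) • X := by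
    intro t ht
    simp only [mem_Icc] at ht
    obtain ⟨s, rfl⟩ := Nat.exists_eq_add_of_le ht.1
    cases s with
    | zero => simpa using hx1
    | succ m =>
      have hm : (m + 1) ∈ Icc 1 T := mem_Icc.mpr ⟨by omega, by omega⟩
      have := (hxrec (m + 1) hm).1
      rwa [show 1 + (m + 1) = (m + 1) + 1 by omega]
  have hxX : ∀ t ∈ Icc 1 (T + 1), xhat t ∈ X := fun t ht => hKX (hxK t ht)
  have h1T : (1 : ℕ) ∈ Icc 1 T := mem_Icc.mpr ⟨le_refl 1, hT⟩
  have hG0 : 0 ≤ G := le_trans (norm_nonneg _) (hf_grad 1 h1T 0 h0X)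
  have hlamle : ∀ t ∈ Icc 1 (T + 1), ‖lam t‖ ≤ lambar := fun t ht =>
    hlambar ▸ Finset.le_sup' (fun t => ‖lam t‖) ht
  -- nonnegativity of multipliers
  have hlamnn : ∀ t ∈ Icc 1 (T + 1), ∀ n, 0 ≤ lam t n := by
    intro t ht n
    simp only [mem_Icc] at ht
    obtain ⟨s, rfl⟩ := Nat.exists_eq_add_of_le ht.1
    cases s with
    | zero => simp [hlam1]
    | succ m =>
      have hm : (m + 1) ∈ Icc 1 T := mem_Icc.mpr ⟨by omega, by omega⟩
      have := hlamrec (m + 1) hm n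
      rw [show 1 + (m + 1) = (m + 1) + 1 by omega, this]
      exact le_max_right _ _
  -- step-size bound
  set M := α * ((d : ℝ) * G + G * lambar) with hM
  have hMnn : 0 ≤ M := by
    rw [hM]; positivity
  have hΔ : ∀ t ∈ Icc 1 T, ‖xhat (t + 1) - xhat t‖ ≤ M := by
    intro t ht
    have htm : t ∈ Icc 1 (T + 1) := by simp only [mem_Icc] at ht ⊢; omega
    obtain ⟨hmem, hmin⟩ := hxrec t ht
    set w := ((d : ℝ) / (2 * δ) * (f t (xhat t + δ • u t) - f t (xhat t - δ • u t))) • u t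
        + ∑ n, lam t n • gradient (fun y => g t y n) (xhat t) with hw
    have hcontr : ‖xhat (t + 1) - xhat t‖ ≤ ‖(xhat t - α • w) - xhat t‖ :=
      proj_contract hKconv hmem (hxK t htm) hmin
    have hnorm1 : ‖(xhat t - α • w) - xhat t‖ = α * ‖w‖ := by
      rw [show (xhat t - α • w) - xhat t = -(α • w) by abel, norm_neg, norm_smul,
        Real.norm_eq_abs, abs_of_pos hα]
    have hc : |(d : ℝ) / (2 * δ) * (f t (xhat t + δ • u t) - f t (xhat t - δ • u t))|
        ≤ (d : ℝ) * G := by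
      rw [abs_mul, abs_of_nonneg (by positivity : (0:ℝ) ≤ (d : ℝ) / (2 * δ))]
      have h2 : |f t (xhat t + δ • u t) - f t (xhat t - δ • u t)| ≤ G * (2 * δ) := by
        have hl := hf_lip t ht (xhat t + δ • u t) (xhat t - δ • u t)
        have heq : (xhat t + δ • u t) - (xhat t - δ • u t) = (2 * δ) • u t := by module
        rwa [heq, norm_smul, Real.norm_eq_abs, abs_of_pos (show (0:ℝ) < 2*δ by linarith), hu t ht,
          mul_one] at hl
      calc (d : ℝ) / (2 * δ) * |f t (xhat t + δ • u t) - f t (xhat t - δ • u t)|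
          ≤ (d : ℝ) / (2 * δ) * (G * (2 * δ)) :=
            mul_le_mul_of_nonneg_left h2 (by positivity)
        _ = (d : ℝ) * G := by field_simp
    have hsum : ‖∑ n, lam t n • gradient (fun y => g t y n) (xhat t)‖ ≤ G * ‖lam t‖ :=
      sum_smul_grad_norm_le (g t) (hg_diff t ht) (xhat t) (lam t) G
        (hg_jac t ht (xhat t) (hxX t htm))
    have hwle : ‖w‖ ≤ (d : ℝ) * G + G * lambar := by
      rw [hw]
      refine le_trans (norm_add_le _ _) ?_
      have hn1 : ‖((d : ℝ) / (2 * δ) * (f t (xhat t + δ • u t) - f t (xhat t - δ • u t))) • u t‖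
          = |(d : ℝ) / (2 * δ) * (f t (xhat t + δ • u t) - f t (xhat t - δ • u t))| := by
        rw [norm_smul, Real.norm_eq_abs, hu t ht, mul_one]
      rw [hn1]
      have hlt : G * ‖lam t‖ ≤ G * lambar :=
        mul_le_mul_of_nonneg_left (hlamle t htm) hG0
      linarith
    calc ‖xhat (t + 1) - xhat t‖ ≤ α * ‖w‖ := hnorm1 ▸ hcontr
      _ ≤ α * ((d : ℝ) * G + G * lambar) := mul_le_mul_of_nonneg_left hwle hα.le
      _ = M := hM.symm
  -- per-step bound on G * ‖Δ‖
  set c2 := G ^ 2 / (2 * β) + β * (α ^ 2 * (d : ℝ) ^ 2 * G ^ 2 + α ^ 2 * G ^ 2 * lambar ^ 2)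
    with hc2
  have hc2nn : 0 ≤ c2 := by rw [hc2]; positivity
  have hGΔ : ∀ t ∈ Icc 1 T, G * ‖xhat (t + 1) - xhat t‖ ≤ c2 := by
    intro t ht
    have hΔt := hΔ t ht
    have hΔnn := norm_nonneg (xhat (t + 1) - xhat t)
    set x := ‖xhat (t + 1) - xhat t‖ with hx
    have h1 : G * x ≤ G ^ 2 / (2 * β) + β / 2 * x ^ 2 := by
      have hpos := div_nonneg (sq_nonneg (G - β * x)) (by linarith : (0:ℝ) ≤ 2 * β)
      have heq : G ^ 2 / (2 * β) + β / 2 * x ^ 2 - G * x = (G - β * x) ^ 2 / (2 * β) := by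
        field_simp; ring
      rw [← heq] at hpos
      linarith
    have h2 : x ^ 2 ≤ M ^ 2 := pow_le_pow_left₀ hΔnn hΔt 2
    have h3 : β / 2 * M ^ 2 ≤ β * (α ^ 2 * (d : ℝ) ^ 2 * G ^ 2 + α ^ 2 * G ^ 2 * lambar ^ 2) := by
      rw [hM]
      have haux := amgm2_aux β α ((d : ℝ) * G) (G * lambar) hβ.le
      have e1 : β * (α ^ 2 * ((d : ℝ) * G) ^ 2 + α ^ 2 * (G * lambar) ^ 2)
          = β * (α ^ 2 * (d : ℝ) ^ 2 * G ^ 2 + α ^ 2 * G ^ 2 * lambar ^ 2) := by ring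
      rw [e1] at haux
      exact haux
    have h4 : β / 2 * x ^ 2 ≤ β / 2 * M ^ 2 :=
      mul_le_mul_of_nonneg_left h2 (by linarith)
    rw [hc2]; linarith
  -- telescoping
  have htel : ∀ n, ∑ t ∈ Icc 1 T, (lam (t + 1) n - lam t n) = lam (T + 1) n := by
    intro n
    have hic : Icc 1 T = Ico 1 (T + 1) := by rw [Finset.Ico_add_one_right_eq_Icc]
    rw [hic, Finset.sum_Ico_eq_sum_range]
    simp only [Nat.add_sub_cancel]
    have hre : ∀ i ∈ Finset.range T, lam (1 + i + 1) n - lam (1 + i) n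
        = lam (i + 1 + 1) n - lam (i + 1) n := by
      intro i _
      rw [show 1 + i + 1 = i + 1 + 1 by omega, show 1 + i = i + 1 by omega]
    rw [Finset.sum_congr rfl hre, Finset.sum_range_sub (fun i => lam (i + 1) n), hlam1]
    simp
  -- per-step dual inequality
  have hstep : ∀ t ∈ Icc 1 T, ∀ n, μ * g t (xhat t) n ≤
      (lam (t + 1) n - lam t n) + μ * (G * ‖xhat (t + 1) - xhat t‖) := by
    intro t ht n
    have htm : t ∈ Icc 1 (T + 1) := by simp only [mem_Icc] at ht ⊢; omega
    have hge : lam t n + μ * (g t (xhat t) n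
        + ⟪gradient (fun y => g t y n) (xhat t), xhat (t + 1) - xhat t⟫) ≤ lam (t + 1) n := by
      rw [hlamrec t ht n]; exact le_max_left _ _
    have habs := abs_real_inner_le_norm (gradient (fun y => g t y n) (xhat t))
      (xhat (t + 1) - xhat t)
    have hgn := hg_grad t ht n (xhat t) (hxX t htm)
    have hmm : ‖gradient (fun y => g t y n) (xhat t)‖ * ‖xhat (t + 1) - xhat t‖
        ≤ G * ‖xhat (t + 1) - xhat t‖ :=
      mul_le_mul_of_nonneg_right hgn (norm_nonneg _)
    have hinner : -(G * ‖xhat (t + 1) - xhat t‖)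
        ≤ ⟪gradient (fun y => g t y n) (xhat t), xhat (t + 1) - xhat t⟫ := by
      have := neg_abs_le ⟪gradient (fun y => g t y n) (xhat t), xhat (t + 1) - xhat t⟫
      linarith
    have hm2 := mul_le_mul_of_nonneg_left hinner hμ.le
    have hd : μ * (g t (xhat t) n
        + ⟪gradient (fun y => g t y n) (xhat t), xhat (t + 1) - xhat t⟫)
        = μ * g t (xhat t) n
          + μ * ⟪gradient (fun y => g t y n) (xhat t), xhat (t + 1) - xhat t⟫ := by ring
    rw [hd] at hge
    have hm3 : μ * -(G * ‖xhat (t + 1) - xhat t‖) = -(μ * (G * ‖xhat (t + 1) - xhat t‖)) := by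
      ring
    rw [hm3] at hm2
    linarith
  -- summed dual inequality, per component
  have hsumg : ∀ n, ∑ t ∈ Icc 1 T, g t (xhat t) n ≤ lam (T + 1) n / μ + (T : ℝ) * c2 := by
    intro n
    have hs1 := Finset.sum_le_sum (fun t ht => hstep t ht n)
    rw [← Finset.mul_sum, Finset.sum_add_distrib, htel n, ← Finset.mul_sum] at hs1
    have hs2 : ∑ t ∈ Icc 1 T, G * ‖xhat (t + 1) - xhat t‖ ≤ (T : ℝ) * c2 := by
      refine le_trans (Finset.sum_le_sum hGΔ) ?_
      rw [Finset.sum_const, Nat.card_Icc]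
      simp [nsmul_eq_mul]
    have hs3 : μ * ∑ t ∈ Icc 1 T, g t (xhat t) n ≤ lam (T + 1) n + μ * ((T : ℝ) * c2) := by
      have := mul_le_mul_of_nonneg_left hs2 hμ.le
      linarith
    have hs4 : ∑ t ∈ Icc 1 T, g t (xhat t) n
        ≤ (lam (T + 1) n + μ * ((T : ℝ) * c2)) / μ := by
      rw [le_div_iff₀ hμ]
      linarith
    have hs5 : (lam (T + 1) n + μ * ((T : ℝ) * c2)) / μ
        = lam (T + 1) n / μ + (T : ℝ) * c2 := by
      field_simp
    rw [hs5] at hs4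
    exact hs4
  -- componentwise bound on the averaged constraint sum
  set c := (T : ℝ) * c2 + (T : ℝ) * (δ * G) with hcdef
  have hcnn : 0 ≤ c := by
    rw [hcdef]
    exact add_nonneg (mul_nonneg (Nat.cast_nonneg T) hc2nn)
      (mul_nonneg (Nat.cast_nonneg T) (mul_nonneg hδ.le hG0))
  set S := (1 / 2 : ℝ) •
      ∑ t ∈ Icc 1 T, (g t (xhat t + δ • u t) + g t (xhat t - δ • u t)) with hS
  have hScomp : ∀ n : Fin N, S n ≤ lam (T + 1) n / μ + c := by
    intro n
    have hSn : S n = (1 / 2 : ℝ) *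
        ∑ t ∈ Icc 1 T, (g t (xhat t + δ • u t) n + g t (xhat t - δ • u t) n) := by
      rw [hS, half_sum_apply (Icc 1 T)
        (fun t => g t (xhat t + δ • u t) + g t (xhat t - δ • u t)) n]
      congr 1
    have hper : ∀ t ∈ Icc 1 T, g t (xhat t + δ • u t) n + g t (xhat t - δ • u t) n
        ≤ 2 * g t (xhat t) n + 2 * (δ * G) := by
      intro t ht
      have h1 := hg_lip t ht n (xhat t + δ • u t) (xhat t)
      have h2 := hg_lip t ht n (xhat t - δ • u t) (xhat t)
      have e1 : (xhat t + δ • u t) - xhat t = δ • u t := by abel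
      have e2 : (xhat t - δ • u t) - xhat t = -(δ • u t) := by abel
      rw [e1, norm_smul, Real.norm_eq_abs, abs_of_pos hδ, hu t ht, mul_one] at h1
      rw [e2, norm_neg, norm_smul, Real.norm_eq_abs, abs_of_pos hδ, hu t ht, mul_one] at h2
      linarith [(abs_le.mp h1).2, (abs_le.mp h2).2]
    have hsum2 : ∑ t ∈ Icc 1 T, (g t (xhat t + δ • u t) n + g t (xhat t - δ • u t) n)
        ≤ 2 * (∑ t ∈ Icc 1 T, g t (xhat t) n) + (T : ℝ) * (2 * (δ * G)) := by
      refine le_trans (Finset.sum_le_sum hper) ?_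
      rw [Finset.sum_add_distrib, Finset.sum_const, Nat.card_Icc, ← Finset.mul_sum]
      simp [nsmul_eq_mul]
    have hg1 := hsumg n
    rw [hSn, hcdef]
    linarith
  -- assemble the vector bound
  have hTm : T + 1 ∈ Icc 1 (T + 1) := mem_Icc.mpr ⟨by omega, le_refl _⟩
  obtain ⟨bvec, hbvec⟩ : ∃ bvec : EuclideanSpace ℝ (Fin N),
      ∀ n, bvec n = lam (T + 1) n / μ + c :=
    ⟨WithLp.toLp 2 (fun n => lam (T + 1) n / μ + c), fun n => rfl⟩
  obtain ⟨cvec, hcvec0⟩ : ∃ cvec : EuclideanSpace ℝ (Fin N), ∀ n, cvec n = c :=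
    ⟨WithLp.toLp 2 (fun _ => c), fun _ => rfl⟩
  have hbnn : ∀ n : Fin N, 0 ≤ bvec n := by
    intro n
    rw [hbvec]
    exact add_nonneg (div_nonneg (hlamnn (T + 1) hTm n) hμ.le) hcnn
  have hmono : ‖posPart' S‖ ≤ ‖bvec‖ := by
    refine enorm_mono _ _ (fun n => le_max_right (S n) 0) (fun n => ?_)
    have : max (S n) 0 ≤ bvec n := by
      rw [hbvec]
      exact max_le (hScomp n) (add_nonneg (div_nonneg (hlamnn (T + 1) hTm n) hμ.le) hcnn)
    exact this
  have hbeq : bvec = μ⁻¹ • lam (T + 1) + cvec := by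
    ext n
    show bvec n = μ⁻¹ * lam (T + 1) n + cvec n
    rw [hbvec, hcvec0, div_eq_inv_mul]
  have hcvecnorm : ‖cvec‖ = Real.sqrt N * c := by
    rw [EuclideanSpace.norm_eq]
    have hh : ∀ n : Fin N, ‖cvec n‖ ^ 2 = c ^ 2 := by
      intro n
      rw [hcvec0, Real.norm_eq_abs, sq_abs]
    rw [Finset.sum_congr rfl (fun n _ => hh n), Finset.sum_const, Finset.card_univ,
      Fintype.card_fin, nsmul_eq_mul, Real.sqrt_mul (Nat.cast_nonneg N), Real.sqrt_sq hcnn]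
  have hnormb : ‖bvec‖ ≤ lambar / μ + Real.sqrt N * c := by
    rw [hbeq]
    refine le_trans (norm_add_le _ _) ?_
    have h1 : ‖μ⁻¹ • lam (T + 1)‖ = ‖lam (T + 1)‖ / μ := by
      rw [norm_smul, Real.norm_eq_abs, abs_of_pos (inv_pos.mpr hμ), div_eq_inv_mul]
    have h2 : ‖lam (T + 1)‖ / μ ≤ lambar / μ := by
      gcongr
      exact hlamle (T + 1) hTm
    rw [h1, hcvecnorm]
    linarith
  have hring : Real.sqrt N * c = G ^ 2 * Real.sqrt N * T / (2 * β) + δ * G * Real.sqrt N * T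
      + β * Real.sqrt N * T *
        (α ^ 2 * (d : ℝ) ^ 2 * G ^ 2 + α ^ 2 * G ^ 2 * lambar ^ 2) := by
    rw [hcdef, hc2]
    field_simp
    ring
  have hfinal := le_trans hmono hnormb
  linarith
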